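/- arXiv:2006.06960 — 4 statements merged into one kernel-verified Lean document; each statement's English description precedes it below -/
import Mathlib

section
/- Let a_0, a_1, ..., a_{N-1} be complex numbers. Then for every integer R ≥ 1, |∑_{0≤n<N} a_n|² ≤ ((N-1+R)/R) · ∑_{|r|<R} (1 - |r|/R) · ∑_{0≤n<N, 0≤n+r<N} a_{n+r}·conj(a_n). -/
open Finset
open scoped Classical

/-- e(x) = exp(2πi x) -/
noncomputable def e (x : ℝ) : ℂ := Complex.exp (2 * Real.pi * Complex.I * x)

/-- Denominators of α = [0; 1, m, 1, m, ...]. -/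
def ostq (m : ℕ) : ℕ → ℕ
  | 0 => 1
  | 1 => 1
  | (i+2) => (if (i+2) % 2 = 0 then m * ostq m (i+1) else ostq m (i+1)) + ostq m i

/-- φ(m) = (m + 2 + √(m² + 4m))/2. -/
noncomputable def phi (m : ℕ) : ℝ := ((m : ℝ) + 2 + Real.sqrt ((m : ℝ)^2 + 4*m)) / 2

/-- Partial quotients of α = [0; 1, m, 1, m, ...] : a_j = m if j even, 1 if j odd. -/
def pq (m j : ℕ) : ℕ := if j % 2 = 0 then m else 1

/-- Markov condition on digit sequences. -/
def Markov (m : ℕ) (ε : ℕ → ℕ) : Prop :=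
  ε 0 < pq m 1 ∧ ∀ i, 1 ≤ i → ε i ≤ pq m (i+1) ∧ (ε i = pq m (i+1) → ε (i-1) = 0)

/-- ε is the (finitely supported) Ostrowski digit sequence of n. -/
def IsOstRep (m n : ℕ) (ε : ℕ → ℕ) : Prop :=
  Markov m ε ∧ ∃ K, (∀ j, K ≤ j → ε j = 0) ∧ n = ∑ i ∈ Finset.range K, ε i * ostq m i

/-- The Ostrowski digits of n. -/
noncomputable def ostEps (m n : ℕ) : ℕ → ℕ :=
  if h : ∃ ε, IsOstRep m n ε then h.choose else fun _ => 0

/-- Ostrowski sum-of-digits function S_α. -/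
noncomputable def Sfull (m n : ℕ) : ℕ := ∑ᶠ i, ostEps m n i

/-- Truncated Ostrowski sum-of-digits function S_{α,k}. -/
noncomputable def Strunc (m k n : ℕ) : ℕ := ∑ i ∈ Finset.range k, ostEps m n i

/-- Distance to the nearest integer. -/
noncomputable def nint (x : ℝ) : ℝ := |x - round x|

lemma count_pairs (R : ℕ) (r : ℤ) (hr : r ∈ Finset.Ioo (-(R : ℤ)) (R : ℤ)) :
    ((Finset.range R ×ˢ Finset.range R).filter
      (fun p => (p.1 : ℤ) - (p.2 : ℤ) = r)).card = R - r.natAbs := by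
  simp only [Finset.mem_Ioo] at hr
  rcases le_or_gt 0 r with h0 | h0
  · have himg : ((Finset.range R ×ˢ Finset.range R).filter
        (fun p => (p.1 : ℤ) - (p.2 : ℤ) = r)) =
        (Finset.range (R - r.natAbs)).image (fun i => (i + r.natAbs, i)) := by
      ext ⟨s, t⟩
      simp only [Finset.mem_filter, Finset.mem_product, Finset.mem_range,
        Finset.mem_image, Prod.mk.injEq]
      constructor
      · rintro ⟨⟨hs, ht⟩, heq⟩
        exact ⟨t, by omega, by omega, rfl⟩
      · rintro ⟨i, hi, h1, h2⟩
        refine ⟨⟨by omega, by omega⟩, by omega⟩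
    rw [himg, Finset.card_image_of_injective _ (fun i j h => by
      simpa using congrArg Prod.snd h), Finset.card_range]
  · have himg : ((Finset.range R ×ˢ Finset.range R).filter
        (fun p => (p.1 : ℤ) - (p.2 : ℤ) = r)) =
        (Finset.range (R - r.natAbs)).image (fun i => (i, i + r.natAbs)) := by
      ext ⟨s, t⟩
      simp only [Finset.mem_filter, Finset.mem_product, Finset.mem_range,
        Finset.mem_image, Prod.mk.injEq]
      constructor
      · rintro ⟨⟨hs, ht⟩, heq⟩
        exact ⟨s, by omega, rfl, by omega⟩
      · rintro ⟨i, hi, h1, h2⟩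
        refine ⟨⟨by omega, by omega⟩, by omega⟩
    rw [himg, Finset.card_image_of_injective _ (fun i j h => by
      simpa using congrArg Prod.fst h), Finset.card_range]

theorem stmt1 (N R : ℕ) (hR : 1 ≤ R) (a : ℕ → ℂ) :
    ‖∑ n ∈ Finset.range N, a n‖ ^ 2 ≤
      (((N : ℝ) - 1 + R) / R) *
        (∑ r ∈ Finset.Ioo (-(R : ℤ)) (R : ℤ),
          ((1 - |(r : ℝ)| / R : ℝ) : ℂ) *
            ∑ n ∈ Finset.range N,
              if 0 ≤ (n : ℤ) + r ∧ (n : ℤ) + r < (N : ℤ) then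
                a ((n : ℤ) + r).toNat * (starRingEnd ℂ) (a n)
              else 0).re := by
  classical
  set b : ℤ → ℂ := fun n => if 0 ≤ n ∧ n < (N : ℤ) then a n.toNat else 0 with hb
  set M : Finset ℤ := Finset.Ico (-(R : ℤ) + 1) (N : ℤ) with hM
  set c : ℤ → ℂ := fun m => ∑ s ∈ Finset.range R, b (m + s) with hc
  set T : ℤ → ℂ := fun r =>
    ∑ n ∈ Finset.Ico (0 : ℤ) (N : ℤ), b (n + r) * (starRingEnd ℂ) (b n) with hT
  have hmap : (Finset.range N).map ⟨(Nat.cast : ℕ → ℤ), Nat.cast_injective⟩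
      = Finset.Ico (0 : ℤ) (N : ℤ) := by
    ext x
    simp only [Finset.mem_map, Finset.mem_range, Finset.mem_Ico,
      Function.Embedding.coeFn_mk]
    constructor
    · rintro ⟨n, hn, rfl⟩; omega
    · rintro ⟨h1, h2⟩; exact ⟨x.toNat, by omega, by omega⟩
  -- b restricted to Ico 0 N sums to the original sum
  have hsum_b : ∑ n ∈ Finset.Ico (0 : ℤ) (N : ℤ), b n = ∑ n ∈ Finset.range N, a n := by
    rw [← hmap, Finset.sum_map]
    refine Finset.sum_congr rfl fun n hn => ?_
    simp only [Finset.mem_range] at hn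
    simp only [hb, Function.Embedding.coeFn_mk, Int.toNat_natCast]
    rw [if_pos (by omega)]
  -- vanishing of b outside
  have hb0 : ∀ x : ℤ, ¬ (0 ≤ x ∧ x < (N : ℤ)) → b x = 0 := fun x hx => if_neg hx
  -- Step 1 : (R:ℂ) * ∑ a = ∑_{m ∈ M} c m
  have step1 : ∑ m ∈ M, c m = (R : ℂ) * ∑ n ∈ Finset.range N, a n := by
    simp only [hc]
    rw [Finset.sum_comm]
    have : ∀ s ∈ Finset.range R, ∑ m ∈ M, b (m + s) = ∑ n ∈ Finset.range N, a n := by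
      intro s hs
      simp only [Finset.mem_range] at hs
      have h1 : ∑ m ∈ M, b (m + s) = ∑ n ∈ Finset.Ico (-(R:ℤ) + 1 + s) ((N:ℤ) + s), b n := by
        rw [hM, ← Finset.map_add_right_Ico _ _ (s : ℤ), Finset.sum_map]
        rfl
      rw [h1, ← hsum_b]
      refine (Finset.sum_subset (fun x hx => ?_) (fun x hx hnx => hb0 x ?_)).symm
      · simp only [Finset.mem_Ico] at hx ⊢; omega
      · simp only [Finset.mem_Ico] at hx hnx; omega
    rw [Finset.sum_congr rfl this, Finset.sum_const, Finset.card_range, nsmul_eq_mul]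
  -- Step 3 : fibering
  have step3 : ∑ m ∈ M, c m * (starRingEnd ℂ) (c m)
      = ∑ r ∈ Finset.Ioo (-(R : ℤ)) (R : ℤ), ((R - r.natAbs : ℕ) : ℂ) * T r := by
    have expand : ∀ m, c m * (starRingEnd ℂ) (c m)
        = ∑ s ∈ Finset.range R, ∑ t ∈ Finset.range R, b (m + s) * (starRingEnd ℂ) (b (m + t)) := by
      intro m
      simp only [hc, map_sum, Finset.sum_mul_sum]
    calc ∑ m ∈ M, c m * (starRingEnd ℂ) (c m)
        = ∑ s ∈ Finset.range R, ∑ t ∈ Finset.range R,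
            ∑ m ∈ M, b (m + s) * (starRingEnd ℂ) (b (m + t)) := by
          rw [Finset.sum_congr rfl (fun m _ => expand m), Finset.sum_comm]
          refine Finset.sum_congr rfl fun s _ => Finset.sum_comm
      _ = ∑ s ∈ Finset.range R, ∑ t ∈ Finset.range R, T ((s : ℤ) - t) := by
          refine Finset.sum_congr rfl fun s hs => Finset.sum_congr rfl fun t ht => ?_
          simp only [Finset.mem_range] at hs ht
          have h1 : ∑ m ∈ M, b (m + s) * (starRingEnd ℂ) (b (m + t))
              = ∑ n ∈ Finset.Ico (-(R:ℤ) + 1 + t) ((N:ℤ) + t),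
                  b (n + ((s : ℤ) - t)) * (starRingEnd ℂ) (b n) := by
            rw [hM, ← Finset.map_add_right_Ico _ _ (t : ℤ), Finset.sum_map]
            refine Finset.sum_congr rfl fun m _ => ?_
            have : (m + (t:ℤ)) + ((s:ℤ) - t) = m + s := by ring
            simp only [Function.Embedding.coeFn_mk, addRightEmbedding_apply]
            rw [this]
          rw [h1, hT]
          refine (Finset.sum_subset (fun x hx => ?_) (fun x hx hnx => ?_)).symm
          · simp only [Finset.mem_Ico] at hx ⊢; omega
          · rw [hb0 x (by simp only [Finset.mem_Ico] at hx hnx; omega), map_zero, mul_zero]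
      _ = ∑ p ∈ Finset.range R ×ˢ Finset.range R, T ((p.1 : ℤ) - p.2) := by
          rw [Finset.sum_product]
      _ = ∑ r ∈ Finset.Ioo (-(R : ℤ)) (R : ℤ),
            ∑ p ∈ (Finset.range R ×ˢ Finset.range R).filter
              (fun p => (p.1 : ℤ) - (p.2 : ℤ) = r), T ((p.1 : ℤ) - p.2) := by
          refine (Finset.sum_fiberwise_of_maps_to (fun p hp => ?_) _).symm
          simp only [Finset.mem_product, Finset.mem_range] at hp
          simp only [Finset.mem_Ioo]; omega
      _ = ∑ r ∈ Finset.Ioo (-(R : ℤ)) (R : ℤ), ((R - r.natAbs : ℕ) : ℂ) * T r := by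
          refine Finset.sum_congr rfl fun r hr => ?_
          rw [Finset.sum_congr rfl (fun p hp => ?_), Finset.sum_const,
            count_pairs R r hr, nsmul_eq_mul]
          · simp only [Finset.mem_filter] at hp
            rw [hp.2]
  
  -- T r equals the statement's inner sum
  have hTU : ∀ r : ℤ, T r = ∑ n ∈ Finset.range N,
      if 0 ≤ (n : ℤ) + r ∧ (n : ℤ) + r < (N : ℤ) then
        a ((n : ℤ) + r).toNat * (starRingEnd ℂ) (a n) else 0 := by
    intro r
    simp only [hT]
    rw [← hmap, Finset.sum_map]
    refine Finset.sum_congr rfl fun n hn => ?_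
    simp only [Finset.mem_range] at hn
    simp only [Function.Embedding.coeFn_mk]
    have hbn : b (n : ℤ) = a n := by
      simp only [hb]; rw [if_pos (by omega)]; simp
    rw [hbn]
    simp only [hb]
    split_ifs with h
    · rfl
    · rw [zero_mul]
  have hR0 : (0 : ℝ) < R := by positivity
  -- card of M
  have hcardZ : (M.card : ℤ) = (N : ℤ) + R - 1 := by
    rw [hM, Int.card_Ico, Int.toNat_of_nonneg (by omega)]; ring
  have hcard : (M.card : ℝ) = (N : ℝ) - 1 + R := by
    have h : ((M.card : ℤ) : ℝ) = (((N : ℤ) + R - 1 : ℤ) : ℝ) := by rw [hcardZ]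
    push_cast at h; linarith
  -- Cauchy–Schwarz
  have key : (R : ℝ) ^ 2 * ‖∑ n ∈ Finset.range N, a n‖ ^ 2 ≤
      ((N : ℝ) - 1 + R) * ∑ m ∈ M, ‖c m‖ ^ 2 := by
    have h1 : (R : ℝ) * ‖∑ n ∈ Finset.range N, a n‖ = ‖∑ m ∈ M, c m‖ := by
      rw [step1, norm_mul, Complex.norm_natCast]
    have h2 : ‖∑ m ∈ M, c m‖ ≤ ∑ m ∈ M, ‖c m‖ := norm_sum_le _ _
    have h3 : (∑ m ∈ M, ‖c m‖) ^ 2 ≤ M.card * ∑ m ∈ M, ‖c m‖ ^ 2 :=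
      sq_sum_le_card_mul_sum_sq
    calc (R : ℝ) ^ 2 * ‖∑ n ∈ Finset.range N, a n‖ ^ 2
        = ((R : ℝ) * ‖∑ n ∈ Finset.range N, a n‖) ^ 2 := by ring
      _ = ‖∑ m ∈ M, c m‖ ^ 2 := by rw [h1]
      _ ≤ (∑ m ∈ M, ‖c m‖) ^ 2 := pow_le_pow_left₀ (norm_nonneg _) h2 2
      _ ≤ M.card * ∑ m ∈ M, ‖c m‖ ^ 2 := h3
      _ = ((N : ℝ) - 1 + R) * ∑ m ∈ M, ‖c m‖ ^ 2 := by rw [hcard]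
  -- norms to real parts
  have hnorm : ∑ m ∈ M, ‖c m‖ ^ 2 = (∑ m ∈ M, c m * (starRingEnd ℂ) (c m)).re := by
    rw [Complex.re_sum]
    refine Finset.sum_congr rfl fun m _ => ?_
    rw [Complex.mul_conj, Complex.ofReal_re, Complex.normSq_eq_norm_sq]
  have hre : (∑ r ∈ Finset.Ioo (-(R : ℤ)) (R : ℤ), ((R - r.natAbs : ℕ) : ℂ) * T r).re
      = ∑ r ∈ Finset.Ioo (-(R : ℤ)) (R : ℤ), ((R : ℝ) - |(r : ℝ)|) * (T r).re := by
    rw [Complex.re_sum]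
    refine Finset.sum_congr rfl fun r hr => ?_
    simp only [Finset.mem_Ioo] at hr
    have hle : r.natAbs ≤ R := by omega
    rw [← Complex.ofReal_natCast, Complex.re_ofReal_mul, Nat.cast_sub hle,
      Nat.cast_natAbs]
    norm_num
  set K : ℝ := ∑ r ∈ Finset.Ioo (-(R : ℤ)) (R : ℤ), ((R : ℝ) - |(r : ℝ)|) * (T r).re with hK
  have keyK : (R : ℝ) ^ 2 * ‖∑ n ∈ Finset.range N, a n‖ ^ 2 ≤ ((N : ℝ) - 1 + R) * K := by
    calc (R : ℝ) ^ 2 * ‖∑ n ∈ Finset.range N, a n‖ ^ 2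
        ≤ ((N : ℝ) - 1 + R) * ∑ m ∈ M, ‖c m‖ ^ 2 := key
      _ = ((N : ℝ) - 1 + R) * K := by rw [hnorm, step3, hre]
  -- rewrite the RHS of the goal
  have hgoal : (∑ r ∈ Finset.Ioo (-(R : ℤ)) (R : ℤ),
      ((1 - |(r : ℝ)| / R : ℝ) : ℂ) *
        ∑ n ∈ Finset.range N,
          if 0 ≤ (n : ℤ) + r ∧ (n : ℤ) + r < (N : ℤ) then
            a ((n : ℤ) + r).toNat * (starRingEnd ℂ) (a n)
          else 0).re = K / R := by
    rw [Complex.re_sum, hK, Finset.sum_div]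
    refine Finset.sum_congr rfl fun r hr => ?_
    rw [← hTU r, Complex.re_ofReal_mul]
    field_simp
  rw [hgoal]
  rw [div_mul_div_comm, le_div_iff₀ (by positivity : (0 : ℝ) < (R : ℝ) * R)]
  nlinarith [keyK]
end

section
/- Let m ≥ 2 and define q_i as: q_0 = q_1 = 1, q_{i} = m·q_{i-1} + q_{i-2} for even i, q_i = q_{i-1} + q_{i-2} for odd i. Then q is strictly increasing for i ≥ 1 and every nonnegative integer n admits a representation n = ∑_{i≥0} ε_i·q_i with integer digits ε_i ≥ 0 such that ∑_{0≤i<K} ε_i·q_i < q_K for every K ≥ 1. -/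
open Finset
open scoped Classical

lemma ostq_pos (m : ℕ) : ∀ i, 0 < ostq m i := by
  intro i
  induction i using Nat.strong_induction_on with
  | _ i ih =>
    match i with
    | 0 => simp [ostq]
    | 1 => simp [ostq]
    | (k+2) =>
      have h1 := ih k (by omega)
      rw [ostq]
      omega

lemma ostq_lt_succ (m : ℕ) (hm : 2 ≤ m) : ∀ i, 1 ≤ i → ostq m i < ostq m (i+1) := by
  intro i hi
  obtain ⟨k, rfl⟩ : ∃ k, i = k + 1 := ⟨i - 1, by omega⟩
  have h0 := ostq_pos m k
  have h1 := ostq_pos m (k+1)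
  show ostq m (k+1) < ostq m (k+2)
  rw [ostq]
  have : ostq m (k+1) ≤ (if (k+2) % 2 = 0 then m * ostq m (k+1) else ostq m (k+1)) := by
    split <;> nlinarith
  omega

lemma ostq_mono (m : ℕ) (hm : 2 ≤ m) : ∀ i j : ℕ, 1 ≤ i → i < j → ostq m i < ostq m j := by
  intro i j hi hij
  induction j with
  | zero => omega
  | succ j ih =>
    rcases Nat.lt_or_ge i j with h | h
    · exact lt_trans (ih h) (ostq_lt_succ m hm j (by omega))
    · have : i = j := by omega
      subst this
      exact ostq_lt_succ m hm i hi

lemma ostq_mono' (m : ℕ) (hm : 2 ≤ m) : ∀ i j : ℕ, 1 ≤ i → i ≤ j → ostq m i ≤ ostq m j := by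
  intro i j hi hij
  rcases Nat.lt_or_ge i j with h | h
  · exact le_of_lt (ostq_mono m hm i j hi h)
  · have : i = j := by omega
    simp [this]

lemma ostq_ge_self (m : ℕ) (hm : 2 ≤ m) : ∀ i, 1 ≤ i → i ≤ ostq m i := by
  intro i hi
  induction i with
  | zero => omega
  | succ i ih =>
    rcases Nat.eq_or_lt_of_le hi with h | h
    · simp [← h, ostq]
    · have h1 : 1 ≤ i := by omega
      have := ostq_lt_succ m hm i h1
      have := ih h1
      omega

theorem stmt3 (m : ℕ) (hm : 2 ≤ m) :
    (∀ i j : ℕ, 1 ≤ i → i < j → ostq m i < ostq m j) ∧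
    ∀ n : ℕ, ∃ ε : ℕ → ℕ,
      (∃ K : ℕ, (∀ j, K ≤ j → ε j = 0) ∧ n = ∑ i ∈ Finset.range K, ε i * ostq m i) ∧
      ∀ K : ℕ, 1 ≤ K → ∑ i ∈ Finset.range K, ε i * ostq m i < ostq m K := by
  refine ⟨ostq_mono m hm, ?_⟩
  intro n
  induction n using Nat.strong_induction_on with
  | _ n ih =>
    by_cases hn : n = 0
    · exact ⟨fun _ => 0, ⟨0, fun j _ => rfl, by simp [hn]⟩,
        fun K hK => by simpa using ostq_pos m K⟩
    · have hn1 : 1 ≤ n := by omega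
      set j := Nat.findGreatest (fun j => ostq m j ≤ n) n with hj
      have hP1 : ostq m 1 ≤ n := by simpa [ostq] using hn1
      have hj1 : 1 ≤ j := Nat.le_findGreatest hn1 hP1
      have hjle : ostq m j ≤ n := Nat.findGreatest_spec (P := fun j => ostq m j ≤ n) hn1 hP1
      have hgt : ∀ t, j < t → n < ostq m t := by
        intro t ht
        rcases Nat.lt_or_ge n t with h | h
        · exact lt_of_lt_of_le h (ostq_ge_self m hm t (by omega))
        · have := Nat.findGreatest_is_greatest (P := fun j => ostq m j ≤ n) ht h
          omega
      set d := n / ostq m j with hd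
      set r := n % ostq m j with hr
      have hqpos := ostq_pos m j
      have hrlt : r < ostq m j := Nat.mod_lt n hqpos
      have hrn : r < n := lt_of_lt_of_le hrlt hjle
      obtain ⟨ε', ⟨K', hK'zero, hK'sum⟩, hpart⟩ := ih r hrn
      -- digits of ε' vanish from index j onwards
      have hvan : ∀ i, j ≤ i → ε' i = 0 := by
        intro i hji
        rcases Nat.lt_or_ge i K' with h | h
        · by_contra hne
          have h1 : 1 ≤ ε' i := by omega
          have hterm : ε' i * ostq m i ≤ ∑ t ∈ Finset.range K', ε' t * ostq m t :=
            Finset.single_le_sum (f := fun t => ε' t * ostq m t)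
              (fun t _ => Nat.zero_le _) (Finset.mem_range.mpr h)
          have hqi : ostq m j ≤ ostq m i := ostq_mono' m hm j i hj1 hji
          have : ostq m i ≤ ε' i * ostq m i := Nat.le_mul_of_pos_left _ h1
          omega
        · exact hK'zero i h
      set ε : ℕ → ℕ := fun i => if i = j then d else ε' i with hε
      -- partial sums of ε' all compute r once the range includes j
      have hsum_eq : ∀ L, j ≤ L → ∑ i ∈ Finset.range L, ε' i * ostq m i = r := by
        intro L hL
        rcases le_total L K' with h | h
        · rw [hK'sum]
          refine Finset.sum_subset (Finset.range_subset_range.mpr h) ?_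
          intro x _ hx
          have : L ≤ x := by simpa using hx
          simp [hvan x (le_trans hL this)]
        · rw [hK'sum]
          refine (Finset.sum_subset (Finset.range_subset_range.mpr h) ?_).symm
          intro x _ hx
          have : K' ≤ x := by simpa using hx
          simp [hK'zero x this]
      -- sums of ε agree with ε' below j
      have hlow : ∀ L, L ≤ j → ∑ i ∈ Finset.range L, ε i * ostq m i
          = ∑ i ∈ Finset.range L, ε' i * ostq m i := by
        intro L hL
        refine Finset.sum_congr rfl fun x hx => ?_
        have : x < L := Finset.mem_range.mp hx
        have : x ≠ j := by omega
        simp [hε, this]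
      have hsumj1 : ∑ i ∈ Finset.range (j+1), ε i * ostq m i = n := by
        rw [Finset.sum_range_succ, hlow j (le_refl j), hsum_eq j (le_refl j)]
        simp only [hε, if_pos rfl]
        have h1 := Nat.div_add_mod n (ostq m j)
        have h2 : ostq m j * (n / ostq m j) = n / ostq m j * ostq m j := Nat.mul_comm _ _
        rw [hd, hr]
        omega
      have hεzero : ∀ t, j + 1 ≤ t → ε t = 0 := by
        intro t ht
        have : t ≠ j := by omega
        simp [hε, this, hvan t (by omega)]
      have hsumhigh : ∀ L, j + 1 ≤ L → ∑ i ∈ Finset.range L, ε i * ostq m i = n := by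
        intro L hL
        rw [← hsumj1]
        refine (Finset.sum_subset (Finset.range_subset_range.mpr hL) ?_).symm
        intro x _ hx
        have : j + 1 ≤ x := by simpa using hx
        simp [hεzero x this]
      refine ⟨ε, ⟨j+1, hεzero, hsumj1.symm⟩, ?_⟩
      intro K hK
      rcases Nat.lt_or_ge j K with h | h
      · rw [hsumhigh K h]
        exact hgt K h
      · rw [hlow K h]
        exact hpart K hK
end

section
/- Let φ be a badly approximable irrational number, i.e., there exists C > 0 with ‖hφ‖ ≥ C/h for all positive integers h. Then for every finite interval I of integers, every real t, and every real K ≥ 1, one has ∑_{h∈I} min(K, ‖t + hφ‖^{−2}) ≪ √K·|I| + K·log(2 + |I|), with an implied constant depending only on φ. -/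
open Finset
open scoped Classical

lemma nint_nonneg (x : ℝ) : 0 ≤ nint x := abs_nonneg _

lemma nint_le_half (x : ℝ) : nint x ≤ 1/2 := abs_sub_round x

lemma nint_le_abs (x : ℝ) : nint x ≤ |x| := by
  rcases le_or_gt (1/2) |x| with h | h
  · exact (nint_le_half x).trans h
  · have h1 := abs_lt.mp h
    have hr : round x = 0 := by
      rw [round_eq]
      have : ⌊x + 1/2⌋ = (0:ℤ) := by
        rw [Int.floor_eq_iff] <;> push_cast <;> constructor <;> linarith [h1.1, h1.2]
      simpa using this
    simp [nint, hr]

lemma nint_add_int (x : ℝ) (n : ℤ) : nint (x + n) = nint x := by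
  unfold nint
  rw [round_add_intCast]
  push_cast
  congr 1
  ring

lemma nint_fract (x : ℝ) : nint (Int.fract x) = nint x := by
  conv_rhs => rw [← Int.fract_add_floor x]
  exact (nint_add_int _ _).symm

lemma nint_of_fract_le (x : ℝ) (h : Int.fract x ≤ 1/2) : nint x = Int.fract x := by
  rw [← nint_fract]
  have hy0 : 0 ≤ Int.fract x := Int.fract_nonneg x
  rcases lt_or_eq_of_le h with h' | h'
  · have hr : round (Int.fract x) = 0 := by
      rw [round_eq]
      have : ⌊Int.fract x + 1/2⌋ = (0:ℤ) := by
        rw [Int.floor_eq_iff] <;> push_cast <;> constructor <;> linarith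
      simpa using this
    rw [nint, hr]
    simpa using abs_of_nonneg hy0
  · have hr : round (Int.fract x) = 1 := by
      rw [round_eq]
      rw [Int.floor_eq_iff] <;> push_cast <;> constructor <;> linarith
    rw [nint, hr]
    rw [abs_of_nonpos (by push_cast; linarith)]
    push_cast
    linarith

lemma nint_of_le_fract (x : ℝ) (h : 1/2 ≤ Int.fract x) : nint x = 1 - Int.fract x := by
  rw [← nint_fract]
  have hy1 : Int.fract x < 1 := Int.fract_lt_one x
  have hr : round (Int.fract x) = 1 := by
    rw [round_eq]
    rw [Int.floor_eq_iff] <;> push_cast <;> constructor <;> linarith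
  rw [nint, hr]
  rw [abs_of_nonpos (by push_cast; linarith)]
  push_cast
  ring

lemma tail_sq_sum (k0 : ℕ) (hk0 : 1 ≤ k0) (n : ℕ) :
    ∑ k ∈ Finset.Ioc k0 n, ((k:ℝ)^2)⁻¹ ≤ (k0:ℝ)⁻¹ := by
  have hk0R : (0:ℝ) < k0 := by exact_mod_cast hk0
  rcases le_or_gt n k0 with h | h
  · rw [Finset.Ioc_eq_empty (by omega), Finset.sum_empty]
    positivity
  · have key : ∀ m, k0 ≤ m → ∑ k ∈ Finset.Ioc k0 m, ((k:ℝ)^2)⁻¹ ≤ (k0:ℝ)⁻¹ - (m:ℝ)⁻¹ := by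
      intro m hm
      induction m, hm using Nat.le_induction with
      | base => simp
      | succ m hm ih =>
        rw [Finset.sum_Ioc_succ_top hm]
        have hm0 : (0:ℝ) < m := lt_of_lt_of_le hk0R (by exact_mod_cast hm)
        have heq : (m:ℝ)⁻¹ - ((m:ℝ)+1)⁻¹ = ((m:ℝ)*((m:ℝ)+1))⁻¹ := by
          field_simp
          ring
        have hstep : (((m:ℝ)+1)^2)⁻¹ ≤ (m:ℝ)⁻¹ - ((m:ℝ)+1)⁻¹ := by
          rw [heq]
          apply inv_anti₀ (by positivity)
          nlinarith
        push_cast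
        linarith
    have hn0 : (0:ℝ) < n := lt_of_lt_of_le hk0R (by exact_mod_cast h.le)
    calc ∑ k ∈ Finset.Ioc k0 n, ((k:ℝ)^2)⁻¹ ≤ (k0:ℝ)⁻¹ - (n:ℝ)⁻¹ := key n h.le
      _ ≤ (k0:ℝ)⁻¹ := by
          have : (0:ℝ) ≤ (n:ℝ)⁻¹ := by positivity
          linarith


lemma bucket_le {p s : ℝ} (hs : 0 < s) (hp : 0 ≤ p) : (⌊p/s⌋₊:ℝ) * s ≤ p := by
  rw [← le_div_iff₀ hs]
  exact Nat.floor_le (by positivity)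

lemma bucket_abs_lt {p q s : ℝ} (hs : 0 < s) (hp : 0 ≤ p) (hq : 0 ≤ q)
    (h : ⌊p/s⌋₊ = ⌊q/s⌋₊) : |p - q| < s := by
  have l1 := bucket_le hs hp
  have l2 : p < ((⌊p/s⌋₊:ℝ)+1) * s := by
    rw [← div_lt_iff₀ hs]
    push_cast
    exact Nat.lt_floor_add_one _
  have l3 : (⌊p/s⌋₊:ℝ) * s ≤ q := by rw [h]; exact bucket_le hs hq
  have l4 : q < ((⌊p/s⌋₊:ℝ)+1) * s := by
    rw [← div_lt_iff₀ hs, h]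
    push_cast
    exact Nat.lt_floor_add_one _
  rw [abs_lt]
  constructor <;> nlinarith

set_option maxHeartbeats 1000000 in
theorem stmt9 (φ C : ℝ) (hC : 0 < C) (hirr : Irrational φ)
    (hba : ∀ h : ℕ, 0 < h → C / (h : ℝ) ≤ nint ((h : ℝ) * φ)) :
    ∃ c : ℝ, 0 < c ∧ ∀ a b : ℤ, ∀ t K : ℝ, 1 ≤ K →
      ∑ h ∈ Finset.Icc a b,
          (if nint (t + (h : ℝ) * φ) = 0 then K
            else min K ((nint (t + (h : ℝ) * φ)) ^ 2)⁻¹) ≤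
        c * (Real.sqrt K * ((Finset.Icc a b).card : ℝ) +
              K * Real.log (2 + ((Finset.Icc a b).card : ℝ))) := by
  refine ⟨8 / C + 8, by positivity, ?_⟩
  intro a b t K hK
  have hK0 : (0:ℝ) < K := lt_of_lt_of_le one_pos hK
  have hsK0 : (0:ℝ) < Real.sqrt K := Real.sqrt_pos.mpr hK0
  have hKs : Real.sqrt K * Real.sqrt K = K := Real.mul_self_sqrt hK0.le
  obtain ⟨N, hNdef⟩ : ∃ n : ℕ, (Finset.Icc a b).card = n := ⟨_, rfl⟩
  rw [hNdef]
  rcases Nat.eq_zero_or_pos N with hN0 | hN0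
  · have hI : Finset.Icc a b = ∅ := Finset.card_eq_zero.mp (hNdef.trans hN0)
    rw [hI, hN0]
    simp only [Finset.sum_empty, Nat.cast_zero, mul_zero, zero_add, add_zero]
    have hl2 : 0 < Real.log 2 := Real.log_pos (by norm_num)
    have h8 : (0:ℝ) < 8/C + 8 := by positivity
    exact mul_nonneg h8.le (mul_nonneg hK0.le hl2.le)
  -- main case
  have hNR : (0:ℝ) < N := by exact_mod_cast hN0
  obtain ⟨δ, hδdef⟩ : ∃ d : ℝ, d = C / (N:ℝ) := ⟨_, rfl⟩
  have hδ : 0 < δ := by rw [hδdef]; positivity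
  have hδ2 : 0 < δ/2 := by positivity
  have hlog : (1:ℝ)/2 ≤ Real.log (2 + (N:ℝ)) := by
    have h2 : Real.log 2 ≤ Real.log (2 + (N:ℝ)) :=
      Real.log_le_log (by norm_num) (by linarith)
    have := Real.log_two_gt_d9
    linarith
  set x : ℤ → ℝ := fun h => nint (t + (h:ℝ) * φ) with hxdef
  have hx0 : ∀ h, 0 ≤ x h := fun h => nint_nonneg _
  set A : ℤ → ℕ := fun h => ⌊x h / (δ/2)⌋₊ with hAdef
  obtain ⟨L, hLdef⟩ : ∃ l : ℕ, l = ⌊1/δ⌋₊ := ⟨_, rfl⟩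
  -- A h ≤ L
  have hAle : ∀ h, A h ≤ L := by
    intro h
    rw [hLdef]
    apply Nat.floor_mono
    have h1 : x h ≤ 1/2 := nint_le_half _
    have h2 : x h / (δ/2) ≤ (1/2) / (δ/2) := by gcongr
    have h3 : (1/2) / (δ/2) = 1/δ := by field_simp
    linarith
  -- separation
  have hsep : ∀ h' h'' : ℤ, h' ∈ Finset.Icc a b → h'' ∈ Finset.Icc a b → h'' < h' →
      δ ≤ nint ((t + (h':ℝ)*φ) - (t + (h'':ℝ)*φ)) := by
    intro h' h'' hm' hm'' hlt
    rw [Finset.mem_Icc] at hm' hm''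
    set n : ℕ := (h' - h'').toNat with hndef
    have hnpos : 0 < n := by omega
    have hcastZ : (n:ℤ) = h' - h'' := Int.toNat_of_nonneg (by omega)
    have hNZ : (N:ℤ) = b + 1 - a := by
      rw [← hNdef, Int.card_Icc]
      exact Int.toNat_of_nonneg (by omega)
    have hnN : (n:ℝ) ≤ (N:ℝ) := by
      have : (n:ℤ) ≤ (N:ℤ) := by omega
      exact_mod_cast this
    have h1 := hba n hnpos
    have h2 : C / (N:ℝ) ≤ C / (n:ℝ) := by
      apply div_le_div_of_nonneg_left hC.le _ hnN
      exact_mod_cast hnpos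
    have h3 : (t + (h':ℝ)*φ) - (t + (h'':ℝ)*φ) = (n:ℝ)*φ := by
      have hc : ((n:ℤ):ℝ) = (h':ℝ) - (h'':ℝ) := by rw [hcastZ]; push_cast; ring
      push_cast at hc ⊢
      rw [hc]
      ring
    rw [h3, hδdef]
    exact le_trans h2 h1
  -- injectivity argument
  set F : ℤ → ℕ × ℕ :=
    fun h => (A h, if Int.fract (t + (h:ℝ)*φ) ≤ 1/2 then 0 else 1) with hFdef
  have hkey : ∀ h' h'' : ℤ, h' ∈ Finset.Icc a b → h'' ∈ Finset.Icc a b → h'' < h' →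
      F h' ≠ F h'' := by
    intro h' h'' hm' hm'' hlt heq
    simp only [hFdef, Prod.mk.injEq] at heq
    obtain ⟨hA, hside⟩ := heq
    have hA' : ⌊x h' / (δ/2)⌋₊ = ⌊x h'' / (δ/2)⌋₊ := by simpa [hAdef] using hA
    have hxx : |x h' - x h''| < δ/2 := bucket_abs_lt hδ2 (hx0 h') (hx0 h'') hA'
    have hfract : |Int.fract (t + (h':ℝ)*φ) - Int.fract (t + (h'':ℝ)*φ)| < δ/2 := by
      by_cases hs : Int.fract (t + (h':ℝ)*φ) ≤ 1/2 <;>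
        by_cases hs' : Int.fract (t + (h'':ℝ)*φ) ≤ 1/2
      · have e1 : x h' = Int.fract (t + (h':ℝ)*φ) := nint_of_fract_le _ hs
        have e2 : x h'' = Int.fract (t + (h'':ℝ)*φ) := nint_of_fract_le _ hs'
        rw [← e1, ← e2]; exact hxx
      · rw [if_pos hs, if_neg hs'] at hside; exact absurd hside (by norm_num)
      · rw [if_neg hs, if_pos hs'] at hside; exact absurd hside (by norm_num)
      · have e1 : x h' = 1 - Int.fract (t + (h':ℝ)*φ) := nint_of_le_fract _ (by linarith)
        have e2 : x h'' = 1 - Int.fract (t + (h'':ℝ)*φ) := nint_of_le_fract _ (by linarith)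
        have e3 : Int.fract (t + (h':ℝ)*φ) - Int.fract (t + (h'':ℝ)*φ) = x h'' - x h' := by
          rw [e1, e2]; ring
        rw [e3, abs_sub_comm]; exact hxx
    have hsmall : nint ((t + (h':ℝ)*φ) - (t + (h'':ℝ)*φ)) < δ/2 := by
      have hd : (t + (h':ℝ)*φ) - (t + (h'':ℝ)*φ)
          = (Int.fract (t + (h':ℝ)*φ) - Int.fract (t + (h'':ℝ)*φ))
            + ((⌊t + (h':ℝ)*φ⌋ - ⌊t + (h'':ℝ)*φ⌋ : ℤ):ℝ) := by
        rw [Int.fract, Int.fract]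
        push_cast
        ring
      calc nint ((t + (h':ℝ)*φ) - (t + (h'':ℝ)*φ))
          = nint (Int.fract (t + (h':ℝ)*φ) - Int.fract (t + (h'':ℝ)*φ)) := by
            rw [hd, nint_add_int]
        _ ≤ |Int.fract (t + (h':ℝ)*φ) - Int.fract (t + (h'':ℝ)*φ)| := nint_le_abs _
        _ < δ/2 := hfract
    have hbig := hsep h' h'' hm' hm'' hlt
    linarith
  have hFinj : ∀ h' ∈ Finset.Icc a b, ∀ h'' ∈ Finset.Icc a b, F h' = F h'' → h' = h'' := by
    intro h' hm' h'' hm'' heq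
    by_contra hne
    rcases Ne.lt_or_gt hne with h | h
    · exact hkey h'' h' hm'' hm' h heq.symm
    · exact hkey h' h'' hm' hm'' h heq
  -- the bucket bound function
  set g : ℕ → ℝ := fun k => if k = 0 then K else min K (((k:ℝ)*(δ/2))^2)⁻¹ with hgdef
  have hgK : g 0 = K := by simp [hgdef]
  have hgsucc : ∀ k : ℕ, g (k+1) = min K ((((k:ℝ)+1)*(δ/2))^2)⁻¹ := by
    intro k
    simp only [hgdef, if_neg (Nat.succ_ne_zero k)]
    push_cast
    ring_nf
  have hg0 : ∀ k, 0 ≤ g k := by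
    intro k
    cases k with
    | zero => rw [hgK]; exact hK0.le
    | succ k => rw [hgsucc]; exact le_min hK0.le (by positivity)
  -- step A : termwise bound
  have hstepA : ∀ h ∈ Finset.Icc a b,
      (if nint (t + (h:ℝ) * φ) = 0 then K
        else min K ((nint (t + (h:ℝ) * φ)) ^ 2)⁻¹) ≤ g (A h) := by
    intro h _
    have hxh : x h = nint (t + (h:ℝ)*φ) := rfl
    by_cases hz : nint (t + (h:ℝ) * φ) = 0
    · have hA0 : A h = 0 := by
        simp only [hAdef, hxdef, hz]
        simp
      rw [if_pos hz, hA0, hgK]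
    · rw [if_neg hz]
      rcases Nat.eq_zero_or_pos (A h) with hA0 | hA0
      · rw [hA0, hgK]
        exact min_le_left _ _
      · obtain ⟨k, hk⟩ := Nat.exists_eq_add_of_lt hA0
        rw [hk] at hA0 ⊢
        rw [zero_add] at hk ⊢
        rw [hgsucc]
        apply min_le_min le_rfl
        apply inv_anti₀ (by positivity)
        have l1 : ((A h):ℝ) * (δ/2) ≤ x h := by
          simp only [hAdef]
          exact bucket_le hδ2 (hx0 h)
        rw [hk] at l1
        push_cast at l1
        rw [hxh] at l1
        exact pow_le_pow_left₀ (by positivity) l1 2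
  -- step B : sum over buckets
  have hstepB : ∑ h ∈ Finset.Icc a b, g (A h) ≤ 2 * ∑ k ∈ Finset.range (L+1), g k := by
    have h2 : (Finset.Icc a b).image F ⊆ (Finset.range (L+1)) ×ˢ (Finset.range 2) := by
      intro p hp
      rw [Finset.mem_image] at hp
      obtain ⟨h, hh, rfl⟩ := hp
      rw [Finset.mem_product, Finset.mem_range, Finset.mem_range]
      constructor
      · exact Nat.lt_succ_of_le (hAle h)
      · simp only [hFdef]
        split <;> norm_num
    calc ∑ h ∈ Finset.Icc a b, g (A h)
        = ∑ p ∈ (Finset.Icc a b).image F, g p.1 := by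
          rw [Finset.sum_image hFinj]
      _ ≤ ∑ p ∈ (Finset.range (L+1)) ×ˢ (Finset.range 2), g p.1 := by
          apply Finset.sum_le_sum_of_subset_of_nonneg h2
          intro p _ _
          exact hg0 _
      _ = 2 * ∑ k ∈ Finset.range (L+1), g k := by
          rw [Finset.sum_product]
          simp only [Finset.sum_const, Finset.card_range, smul_eq_mul]
          rw [Finset.mul_sum]
          apply Finset.sum_congr rfl
          intro k _
          ring
  -- step C : bucket sum bound
  obtain ⟨k0, hk0def⟩ : ∃ k : ℕ, k = ⌈2/(δ * Real.sqrt K)⌉₊ := ⟨_, rfl⟩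
  have hk0pos : 1 ≤ k0 := by
    rw [hk0def, Nat.one_le_iff_ne_zero, ← Nat.pos_iff_ne_zero, Nat.ceil_pos]
    exact div_pos (by norm_num) (mul_pos hδ hsK0)
  have hk0ge : 2/(δ * Real.sqrt K) ≤ (k0:ℝ) := by rw [hk0def]; exact Nat.le_ceil _
  have hk0le : (k0:ℝ) ≤ 2/(δ * Real.sqrt K) + 1 := by
    rw [hk0def]
    exact le_of_lt (Nat.ceil_lt_add_one (div_pos (by norm_num) (mul_pos hδ hsK0)).le)
  have hstepC : ∑ k ∈ Finset.range (L+1), g k ≤ 2*K + 4*(Real.sqrt K/δ) := by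
    rw [Finset.sum_range_succ']
    have hsplit : ∑ i ∈ Finset.range L, g (i+1) ≤ (k0:ℝ)*K + (4/δ^2) * (k0:ℝ)⁻¹ := by
      rw [← Finset.sum_filter_add_sum_filter_not (Finset.range L) (fun i => i + 1 ≤ k0)]
      have hb1 : ∑ i ∈ (Finset.range L).filter (fun i => i + 1 ≤ k0), g (i+1) ≤ (k0:ℝ)*K := by
        calc ∑ i ∈ (Finset.range L).filter (fun i => i + 1 ≤ k0), g (i+1)
            ≤ ∑ _i ∈ (Finset.range L).filter (fun i => i + 1 ≤ k0), K := by
              apply Finset.sum_le_sum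
              intro i _
              rw [hgsucc]
              exact min_le_left _ _
          _ = ((Finset.range L).filter (fun i => i + 1 ≤ k0)).card * K := by
              rw [Finset.sum_const, nsmul_eq_mul]
          _ ≤ (k0:ℝ)*K := by
              apply mul_le_mul_of_nonneg_right _ hK0.le
              have hsub : (Finset.range L).filter (fun i => i + 1 ≤ k0) ⊆ Finset.range k0 := by
                intro i hi
                simp only [Finset.mem_filter, Finset.mem_range] at hi ⊢
                omega
              have := Finset.card_le_card hsub
              rw [Finset.card_range] at this
              exact_mod_cast this
      have hb2 : ∑ i ∈ (Finset.range L).filter (fun i => ¬ (i + 1 ≤ k0)), g (i+1)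
          ≤ (4/δ^2) * (k0:ℝ)⁻¹ := by
        have e1 : ∀ i ∈ (Finset.range L).filter (fun i => ¬ (i + 1 ≤ k0)),
            g (i+1) ≤ (4/δ^2) * ((((i:ℝ)+1))^2)⁻¹ := by
          intro i _
          rw [hgsucc]
          refine le_trans (min_le_right _ _) (le_of_eq ?_)
          rw [mul_pow, mul_inv, mul_comm]
          congr 1
          rw [div_pow, inv_div]
          norm_num
        calc ∑ i ∈ (Finset.range L).filter (fun i => ¬ (i + 1 ≤ k0)), g (i+1)
            ≤ ∑ i ∈ (Finset.range L).filter (fun i => ¬ (i + 1 ≤ k0)),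
                (4/δ^2) * ((((i:ℝ)+1))^2)⁻¹ := Finset.sum_le_sum e1
          _ = (4/δ^2) * ∑ i ∈ (Finset.range L).filter (fun i => ¬ (i + 1 ≤ k0)),
                ((((i:ℝ)+1))^2)⁻¹ := by rw [Finset.mul_sum]
          _ ≤ (4/δ^2) * (k0:ℝ)⁻¹ := by
              apply mul_le_mul_of_nonneg_left _ (by positivity)
              have himg : ∑ i ∈ (Finset.range L).filter (fun i => ¬ (i + 1 ≤ k0)),
                  ((((i:ℝ)+1))^2)⁻¹ ≤ ∑ k ∈ Finset.Ioc k0 L, ((k:ℝ)^2)⁻¹ := by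
                have hinj : ∀ p ∈ (Finset.range L).filter (fun i => ¬ (i + 1 ≤ k0)),
                    ∀ q ∈ (Finset.range L).filter (fun i => ¬ (i + 1 ≤ k0)),
                    p + 1 = q + 1 → p = q := by
                  intro p _ q _ h
                  omega
                set T : Finset ℕ := ((Finset.range L).filter
                    (fun i => ¬ (i + 1 ≤ k0))).image (fun i => i + 1) with hT
                have heq3 : ∑ k ∈ T, ((k:ℝ)^2)⁻¹
                    = ∑ i ∈ (Finset.range L).filter (fun i => ¬ (i + 1 ≤ k0)),
                      (((i+1:ℕ):ℝ)^2)⁻¹ := by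
                  rw [hT]
                  exact Finset.sum_image hinj
                have heq4 : ∑ i ∈ (Finset.range L).filter (fun i => ¬ (i + 1 ≤ k0)),
                    ((((i:ℝ)+1))^2)⁻¹
                    = ∑ i ∈ (Finset.range L).filter (fun i => ¬ (i + 1 ≤ k0)),
                      (((i+1:ℕ):ℝ)^2)⁻¹ := by
                  apply Finset.sum_congr rfl
                  intro i _
                  push_cast
                  ring
                rw [heq4, ← heq3]
                apply Finset.sum_le_sum_of_subset_of_nonneg
                · intro k hk
                  simp only [hT, Finset.mem_image, Finset.mem_filter, Finset.mem_range] at hk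
                  obtain ⟨i, ⟨hi1, hi2⟩, rfl⟩ := hk
                  rw [Finset.mem_Ioc]
                  omega
                · intro k _ _
                  positivity
              exact le_trans himg (tail_sq_sum k0 hk0pos L)
      linarith
    have har1 : (k0:ℝ)*K ≤ 2*(Real.sqrt K/δ) + K := by
      have h1 : (k0:ℝ)*K ≤ (2/(δ * Real.sqrt K) + 1)*K :=
        mul_le_mul_of_nonneg_right hk0le hK0.le
      have h2 : (2/(δ * Real.sqrt K))*K = 2*(Real.sqrt K/δ) := by
        rw [← mul_div_assoc, div_mul_eq_mul_div, div_eq_div_iff (mul_pos hδ hsK0).ne' hδ.ne']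
        linear_combination (-2*δ) * hKs
      have h3 : (2/(δ * Real.sqrt K) + 1)*K = 2*(Real.sqrt K/δ) + K := by
        rw [add_mul, one_mul, h2]
      linarith
    have har2 : (4/δ^2) * (k0:ℝ)⁻¹ ≤ 2*(Real.sqrt K/δ) := by
      have h1 : (k0:ℝ)⁻¹ ≤ (2/(δ * Real.sqrt K))⁻¹ :=
        inv_anti₀ (div_pos (by norm_num) (mul_pos hδ hsK0)) hk0ge
      have h2 : (4/δ^2) * (2/(δ * Real.sqrt K))⁻¹ = 2*(Real.sqrt K/δ) := by
        rw [← mul_div_assoc, inv_div, div_mul_div_comm]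
        rw [div_eq_div_iff (by positivity) hδ.ne']
        ring
      calc (4/δ^2) * (k0:ℝ)⁻¹ ≤ (4/δ^2) * (2/(δ * Real.sqrt K))⁻¹ :=
            mul_le_mul_of_nonneg_left h1 (by positivity)
        _ = 2*(Real.sqrt K/δ) := h2
    rw [hgK]
    have := hsplit
    calc (∑ i ∈ Finset.range L, g (i+1)) + K
        ≤ (↑k0*K + 4/δ^2*(↑k0:ℝ)⁻¹) + K := add_le_add_left hsplit K
      _ ≤ 2*K + 4*(Real.sqrt K/δ) := by linarith [har1, har2]
  -- assemble
  have hmain : ∑ h ∈ Finset.Icc a b,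
      (if nint (t + (h:ℝ) * φ) = 0 then K
        else min K ((nint (t + (h:ℝ) * φ)) ^ 2)⁻¹) ≤ 4*K + 8*(Real.sqrt K/δ) := by
    calc ∑ h ∈ Finset.Icc a b,
        (if nint (t + (h:ℝ) * φ) = 0 then K
          else min K ((nint (t + (h:ℝ) * φ)) ^ 2)⁻¹)
        ≤ ∑ h ∈ Finset.Icc a b, g (A h) := Finset.sum_le_sum hstepA
      _ ≤ 2 * ∑ k ∈ Finset.range (L+1), g k := hstepB
      _ ≤ 2 * (2*K + 4*(Real.sqrt K/δ)) := by linarith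
      _ = 4*K + 8*(Real.sqrt K/δ) := by ring
  have hfin : 4*K + 8*(Real.sqrt K/δ) ≤
      (8/C + 8) * (Real.sqrt K * (N:ℝ) + K * Real.log (2 + (N:ℝ))) := by
    have e1 : 8*(Real.sqrt K/δ) = (8/C) * (Real.sqrt K * (N:ℝ)) := by
      have h9 : (8/C) * (Real.sqrt K * (N:ℝ)) = 8*Real.sqrt K*(N:ℝ)/C := by ring
      rw [h9, ← mul_div_assoc, hδdef, div_div_eq_mul_div]
    have h4 : 4*K ≤ 8 * (K * Real.log (2 + (N:ℝ))) := by nlinarith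
    have hX : 0 ≤ Real.sqrt K * (N:ℝ) := by positivity
    have hY : 0 ≤ K * Real.log (2 + (N:ℝ)) := by nlinarith
    have hc1 : 0 ≤ 8/C := by positivity
    nlinarith [mul_nonneg hc1 hY]
  exact le_trans hmain hfin
end

section
/- Let φ be an irrational with ‖hφ‖ ≥ C/h for all positive integers h (some C > 0). Then for every positive integer Q and real t, ∑_{h=1}^{Q} min(Q, ‖t + hφ‖^{−1}) ≪ Q·log(2Q), with implied constant depending only on φ. -/
open Finset
open scoped Classical

lemma nint_neg' (x : ℝ) : nint (-x) = nint x := by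
  have key : ∀ y : ℝ, nint (-y) ≤ nint y := by
    intro y
    calc nint (-y) ≤ |(-y) - ((-round y : ℤ) : ℝ)| := round_le _ _
      _ = nint y := by
          unfold nint
          push_cast
          rw [show -y - -(round y:ℝ) = -(y - (round y:ℝ)) by ring, abs_neg]
  have h := key (-x)
  rw [neg_neg] at h
  exact le_antisymm (key x) h

lemma sep' (φ C : ℝ)
    (hba : ∀ h : ℕ, 0 < h → C / (h : ℝ) ≤ nint ((h : ℝ) * φ))
    {Q h₁ h₂ : ℕ} (m1 : h₁ ∈ Finset.Icc 1 Q) (m2 : h₂ ∈ Finset.Icc 1 Q) (hne : h₁ ≠ h₂)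
    (hC : 0 < C) :
    C / Q ≤ nint ((h₁ : ℝ) * φ - (h₂ : ℝ) * φ) := by
  simp only [Finset.mem_Icc] at m1 m2
  have main : ∀ a b : ℕ, 1 ≤ a → a ≤ Q → 1 ≤ b → b ≤ Q → b < a →
      C / Q ≤ nint ((a : ℝ) * φ - (b : ℝ) * φ) := by
    intro a b _ haQ hb1 _ hba'
    have hk : 0 < a - b := Nat.sub_pos_of_lt hba'
    have hcast : (a : ℝ) * φ - (b : ℝ) * φ = ((a - b : ℕ) : ℝ) * φ := by
      rw [Nat.cast_sub hba'.le]; ring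
    rw [hcast]
    refine le_trans ?_ (hba (a - b) hk)
    apply div_le_div_of_nonneg_left hC.le
    · exact_mod_cast hk
    · exact_mod_cast le_trans (Nat.sub_le a b) haQ
  rcases lt_or_gt_of_ne hne with h | h
  · rw [show (h₁ : ℝ) * φ - (h₂ : ℝ) * φ = -((h₂:ℝ)*φ - (h₁:ℝ)*φ) by ring, nint_neg']
    exact main h₂ h₁ m2.1 m2.2 m1.1 m1.2 h
  · exact main h₁ h₂ m1.1 m1.2 m2.1 m2.2 h

set_option maxHeartbeats 2000000 in
theorem stmt10 (φ C : ℝ) (hC : 0 < C) (hirr : Irrational φ)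
    (hba : ∀ h : ℕ, 0 < h → C / (h : ℝ) ≤ nint ((h : ℝ) * φ)) :
    ∃ c : ℝ, 0 < c ∧ ∀ Q : ℕ, 0 < Q → ∀ t : ℝ,
      ∑ h ∈ Finset.Icc 1 Q,
          (if nint (t + (h : ℝ) * φ) = 0 then (Q : ℝ)
            else min (Q : ℝ) (nint (t + (h : ℝ) * φ))⁻¹) ≤
        c * Q * Real.log (2 * Q) := by
  have hlog2 : (0:ℝ) < Real.log 2 := Real.log_pos one_lt_two
  set A : ℝ := 2 + (4/C) * (1 + |Real.log C|) with hA
  have hApos : 0 < A := by positivity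
  refine ⟨A / Real.log 2 + 4 / C, by positivity, ?_⟩
  intro Q hQ t
  have hQR : (0:ℝ) < Q := by exact_mod_cast hQ
  have hQ1 : (1:ℝ) ≤ Q := by exact_mod_cast hQ
  have hC2 : C ≤ 1/2 := by
    have h1 := hba 1 one_pos
    have h2 : nint (((1:ℕ):ℝ) * φ) ≤ 1/2 := abs_sub_round _
    norm_num at h1 h2
    linarith
  set δ : ℝ := C / (2*Q) with hδ
  have hδpos : 0 < δ := by positivity
  set jdx : ℕ → ℕ := fun h => ⌊nint (t + (h:ℝ) * φ) / δ⌋₊ with hjdx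
  set N : ℕ := ⌊(Q:ℝ)/C⌋₊ with hN
  -- shell bounds
  have hshell : ∀ h j, jdx h = j →
      (j:ℝ) * δ ≤ nint (t + (h:ℝ)*φ) ∧ nint (t + (h:ℝ)*φ) < ((j:ℝ)+1) * δ := by
    intro h j hj
    have h0 : (0:ℝ) ≤ nint (t + (h:ℝ)*φ) / δ := div_nonneg (abs_nonneg _) hδpos.le
    have l1 : ((jdx h : ℕ):ℝ) ≤ nint (t + (h:ℝ)*φ) / δ := Nat.floor_le h0
    have l2 : nint (t + (h:ℝ)*φ) / δ < (jdx h : ℝ) + 1 := Nat.lt_floor_add_one _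
    rw [hj] at l1 l2
    constructor
    · calc (j:ℝ) * δ ≤ (nint (t + (h:ℝ)*φ) / δ) * δ := by
            exact mul_le_mul_of_nonneg_right l1 hδpos.le
        _ = nint (t + (h:ℝ)*φ) := by field_simp
    · calc nint (t + (h:ℝ)*φ) = (nint (t + (h:ℝ)*φ) / δ) * δ := by field_simp
        _ < ((j:ℝ)+1) * δ := by exact mul_lt_mul_of_pos_right l2 hδpos
  have hmap : ∀ h ∈ Finset.Icc 1 Q, jdx h ∈ Finset.range (N+1) := by
    intro h _
    rw [Finset.mem_range, Nat.lt_succ_iff, hjdx, hN]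
    apply Nat.floor_le_floor
    calc nint (t + (h:ℝ)*φ) / δ ≤ (1/2) / δ := by
          exact (div_le_div_iff_of_pos_right hδpos).mpr (abs_sub_round _)
      _ = (Q:ℝ)/C := by rw [hδ]; field_simp
  -- key: no two distinct h in same shell with same sign
  have key : ∀ h₁ h₂, h₁ ∈ Finset.Icc 1 Q → h₂ ∈ Finset.Icc 1 Q → h₁ ≠ h₂ → jdx h₁ = jdx h₂ →
      ((0 ≤ (t + (h₁:ℝ)*φ) - round (t + (h₁:ℝ)*φ)) ↔
        (0 ≤ (t + (h₂:ℝ)*φ) - round (t + (h₂:ℝ)*φ))) → False := by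
    intro h₁ h₂ m1 m2 hne hj hsig
    obtain ⟨lb1, ub1⟩ := hshell h₁ (jdx h₁) rfl
    obtain ⟨lb2, ub2⟩ := hshell h₂ (jdx h₁) hj.symm
    set s₁ := (t + (h₁:ℝ)*φ) - round (t + (h₁:ℝ)*φ) with hs₁
    set s₂ := (t + (h₂:ℝ)*φ) - round (t + (h₂:ℝ)*φ) with hs₂
    have e1 : nint (t + (h₁:ℝ)*φ) = |s₁| := rfl
    have e2 : nint (t + (h₂:ℝ)*φ) = |s₂| := rfl
    rw [e1] at lb1 ub1
    rw [e2] at lb2 ub2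
    have habs : |s₁ - s₂| < δ := by
      rcases le_or_gt 0 s₁ with hp | hn
      · have hp2 : 0 ≤ s₂ := hsig.mp hp
        rw [abs_of_nonneg hp] at lb1 ub1
        rw [abs_of_nonneg hp2] at lb2 ub2
        rw [abs_sub_lt_iff]
        constructor <;> linarith
      · have hn2 : s₂ < 0 := by
          by_contra hcon
          push_neg at hcon
          exact absurd (hsig.mpr hcon) (not_le.mpr hn)
        rw [abs_of_neg hn] at lb1 ub1
        rw [abs_of_neg hn2] at lb2 ub2
        rw [abs_sub_lt_iff]
        constructor <;> linarith
    have hup : nint ((t + (h₁:ℝ)*φ) - (t + (h₂:ℝ)*φ)) < δ := by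
      calc nint ((t + (h₁:ℝ)*φ) - (t + (h₂:ℝ)*φ))
          ≤ |((t + (h₁:ℝ)*φ) - (t + (h₂:ℝ)*φ)) -
              ((round (t + (h₁:ℝ)*φ) - round (t + (h₂:ℝ)*φ) : ℤ) : ℝ)| := round_le _ _
        _ = |s₁ - s₂| := by rw [hs₁, hs₂]; push_cast; ring_nf
        _ < δ := habs
    have hlow : C / Q ≤ nint ((t + (h₁:ℝ)*φ) - (t + (h₂:ℝ)*φ)) := by
      rw [show (t + (h₁:ℝ)*φ) - (t + (h₂:ℝ)*φ) = (h₁:ℝ)*φ - (h₂:ℝ)*φ by ring]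
      exact sep' φ C hba m1 m2 hne hC
    have hδQ : δ < C / Q := by
      rw [hδ, div_lt_div_iff₀ (by positivity) hQR]
      nlinarith
    linarith
  -- cardinality of each fiber is at most 2
  have hcard : ∀ j, ((Finset.Icc 1 Q).filter (fun h => jdx h = j)).card ≤ 2 := by
    intro j
    by_contra hcon
    push_neg at hcon
    obtain ⟨a, b, c', ha, hb, hc, hab, hac, hbc⟩ := Finset.two_lt_card_iff.mp hcon
    simp only [Finset.mem_filter] at ha hb hc
    by_cases pab : (0 ≤ (t + (a:ℝ)*φ) - round (t + (a:ℝ)*φ)) ↔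
        (0 ≤ (t + (b:ℝ)*φ) - round (t + (b:ℝ)*φ))
    · exact key a b ha.1 hb.1 hab (ha.2.trans hb.2.symm) pab
    · by_cases pac : (0 ≤ (t + (a:ℝ)*φ) - round (t + (a:ℝ)*φ)) ↔
          (0 ≤ (t + (c':ℝ)*φ) - round (t + (c':ℝ)*φ))
      · exact key a c' ha.1 hc.1 hac (ha.2.trans hc.2.symm) pac
      · have pbc : (0 ≤ (t + (b:ℝ)*φ) - round (t + (b:ℝ)*φ)) ↔
            (0 ≤ (t + (c':ℝ)*φ) - round (t + (c':ℝ)*φ)) := by tauto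
        exact key b c' hb.1 hc.1 hbc (hb.2.trans hc.2.symm) pbc
  -- per-shell termwise bound
  set g : ℕ → ℝ := fun j => if j = 0 then (Q:ℝ) else 2*Q/(j*C) with hg
  have hgnn : ∀ j, 0 ≤ g j := by
    intro j
    simp only [hg]
    split
    · positivity
    · positivity
  have hterm : ∀ j, ∀ h ∈ (Finset.Icc 1 Q).filter (fun h => jdx h = j),
      (if nint (t + (h : ℝ) * φ) = 0 then (Q : ℝ)
        else min (Q : ℝ) (nint (t + (h : ℝ) * φ))⁻¹) ≤ g j := by
    intro j h hh
    simp only [Finset.mem_filter] at hh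
    rcases Nat.eq_zero_or_pos j with rfl | hj
    · simp only [hg, if_pos rfl]
      split
      · exact le_refl _
      · exact min_le_left _ _
    · have hjne : j ≠ 0 := hj.ne'
      obtain ⟨lb, _⟩ := hshell h j hh.2
      have hjR : (0:ℝ) < j := by exact_mod_cast hj
      have hpos : 0 < nint (t + (h:ℝ)*φ) := lt_of_lt_of_le (by positivity) lb
      rw [if_neg hpos.ne']
      simp only [hg, if_neg hjne]
      calc min (Q:ℝ) (nint (t + (h:ℝ)*φ))⁻¹ ≤ (nint (t + (h:ℝ)*φ))⁻¹ := min_le_right _ _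
        _ ≤ ((j:ℝ)*δ)⁻¹ := by
            apply inv_anti₀ (by positivity) lb
        _ = 2*Q/(j*C) := by rw [hδ]; field_simp
  -- harmonic sum bound
  have hharm : ∑ j ∈ Finset.range N, ((j:ℝ)+1)⁻¹ ≤ 1 + Real.log N := by
    have h1 : ((harmonic N : ℚ) : ℝ) ≤ 1 + Real.log N := harmonic_le_one_add_log N
    refine le_trans (le_of_eq ?_) h1
    simp only [harmonic]
    push_cast
    rfl
  have hNle : (N:ℝ) ≤ (Q:ℝ)/C := Nat.floor_le (by positivity)
  have hN2 : 2 ≤ N := by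
    rw [hN]
    apply Nat.le_floor
    rw [le_div_iff₀ hC]
    push_cast
    nlinarith
  have hNpos : (0:ℝ) < N := by
    have : (0:ℕ) < N := lt_of_lt_of_le (by norm_num) hN2
    exact_mod_cast this
  have hlogN : Real.log N ≤ Real.log Q - Real.log C := by
    calc Real.log N ≤ Real.log ((Q:ℝ)/C) := Real.log_le_log hNpos hNle
      _ = Real.log Q - Real.log C := Real.log_div (ne_of_gt hQR) hC.ne'
  have hlogQ : Real.log Q ≤ Real.log (2*Q) := Real.log_le_log hQR (by linarith)
  have hlog2Q : Real.log 2 ≤ Real.log (2*Q) := Real.log_le_log (by norm_num) (by nlinarith)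
  calc (∑ h ∈ Finset.Icc 1 Q, (if nint (t + (h : ℝ) * φ) = 0 then (Q : ℝ)
            else min (Q : ℝ) (nint (t + (h : ℝ) * φ))⁻¹))
      = ∑ j ∈ Finset.range (N+1), ∑ h ∈ (Finset.Icc 1 Q).filter (fun h => jdx h = j),
          (if nint (t + (h : ℝ) * φ) = 0 then (Q : ℝ)
            else min (Q : ℝ) (nint (t + (h : ℝ) * φ))⁻¹) :=
        (Finset.sum_fiberwise_of_maps_to hmap _).symm
    _ ≤ ∑ j ∈ Finset.range (N+1), 2 * g j := by
        apply Finset.sum_le_sum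
        intro j _
        calc (∑ h ∈ (Finset.Icc 1 Q).filter (fun h => jdx h = j),
              (if nint (t + (h : ℝ) * φ) = 0 then (Q : ℝ)
                else min (Q : ℝ) (nint (t + (h : ℝ) * φ))⁻¹))
            ≤ ((Finset.Icc 1 Q).filter (fun h => jdx h = j)).card • g j :=
              Finset.sum_le_card_nsmul _ _ _ (hterm j)
          _ ≤ 2 * g j := by
              rw [nsmul_eq_mul]
              exact mul_le_mul_of_nonneg_right (by exact_mod_cast hcard j) (hgnn j)
    _ = (∑ j ∈ Finset.range N, 2 * g (j+1)) + 2 * Q := by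
        rw [Finset.sum_range_succ']
        simp [hg]
    _ = (4*Q/C) * (∑ j ∈ Finset.range N, ((j:ℝ)+1)⁻¹) + 2*Q := by
        rw [Finset.mul_sum]
        congr 1
        apply Finset.sum_congr rfl
        intro j _
        simp only [hg, Nat.succ_ne_zero, if_false]
        push_cast
        field_simp
        ring
    _ ≤ (4*Q/C) * (1 + Real.log N) + 2*Q := by
        have hf : (0:ℝ) ≤ 4*Q/C := by positivity
        nlinarith [hharm]
    _ ≤ (4*Q/C) * (1 + Real.log Q + |Real.log C|) + 2*Q := by
        have h1 : Real.log N ≤ Real.log Q + |Real.log C| := by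
          have h2 := neg_abs_le (Real.log C)
          linarith
        have hf : (0:ℝ) ≤ 4*Q/C := by positivity
        nlinarith
    _ = A * Q + (4/C) * Q * Real.log Q := by
        rw [hA]
        field_simp
        ring
    _ ≤ A * Q + (4/C) * Q * Real.log (2*Q) := by
        have hf : (0:ℝ) ≤ (4/C) * Q := by positivity
        nlinarith
    _ ≤ (A/Real.log 2) * Q * Real.log (2*Q) + (4/C) * Q * Real.log (2*Q) := by
        have hE : (A/Real.log 2 * Q) * Real.log 2 = A * Q := by
          field_simp
        have hB : (0:ℝ) ≤ A / Real.log 2 * Q := by positivity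
        have hF := mul_le_mul_of_nonneg_left hlog2Q hB
        linarith [hF, hE]
    _ = (A / Real.log 2 + 4 / C) * Q * Real.log (2*Q) := by ring
end
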